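/- Correctness of shallow fixability for existential variables: if value a ∈ D_{x_i} is shallow-fixable for an existential variable x_i in φ = (X,Q,D,C), and φ' is φ with D_{x_i} replaced by {a}, then φ has a winning strategy if and only if φ' has a winning strategy. -/

import Mathlib

structure QCSP (n : ℕ) (α : Type) where
  Q : Fin n → Bool
  D : Fin n → Set α
  C : Set (Set (Fin n → α))

namespace QCSP

variable {n : ℕ} {α : Type}

/-- Solutions: tuples in the product of the domains satisfying every constraint. -/
def sol (φ : QCSP n α) : Set (Fin n → α) :=
  {t | (∀ i, t i ∈ φ.D i) ∧ ∀ c ∈ φ.C, t ∈ c}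

/-- A strategy assigns to each existential variable `i` a value in `D i`, depending
only on the universal variables preceding `i`. -/
def IsStrategy (φ : QCSP n α) (s : Fin n → (Fin n → α) → α) : Prop :=
  (∀ i, φ.Q i = true → ∀ t, s i t ∈ φ.D i) ∧
  (∀ i, φ.Q i = true → ∀ t t' : Fin n → α,
      (∀ j, j < i → φ.Q j = false → t j = t' j) → s i t = s i t')

/-- Scenarios of a strategy `s`: tuples in the product of the domains whose
existential components follow `s`. -/
def sce (φ : QCSP n α) (s : Fin n → (Fin n → α) → α) : Set (Fin n → α) :=
  {t | (∀ i, t i ∈ φ.D i) ∧ ∀ i, φ.Q i = true → t i = s i t}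

/-- A winning strategy: a strategy all of whose scenarios are solutions. -/
def Winning (φ : QCSP n α) (s : Fin n → (Fin n → α) → α) : Prop :=
  φ.IsStrategy s ∧ φ.sce s ⊆ φ.sol

/-- Outcomes: the union of the scenario sets of all winning strategies. -/
def out (φ : QCSP n α) : Set (Fin n → α) :=
  {t | ∃ s, φ.Winning s ∧ t ∈ φ.sce s}

end QCSP

theorem shallow_fixable_correct {n : ℕ} {α : Type} (φ : QCSP n α)
    (i : Fin n) (a : α) (hex : φ.Q i = true) (ha : a ∈ φ.D i)
    (hfix : ∀ t ∈ φ.out, ∃ t' ∈ φ.out, (∀ j, j < i → t j = t' j) ∧ t' i = a) :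
    (∃ s, φ.Winning s) ↔
      ∃ s, (QCSP.mk φ.Q (Function.update φ.D i {a}) φ.C).Winning s := by
  classical
  set φ' : QCSP n α := QCSP.mk φ.Q (Function.update φ.D i {a}) φ.C with hφ'def
  have hD' : ∀ j, j ≠ i → φ'.D j = φ.D j := fun j hj => Function.update_of_ne hj _ _
  have hD'i : φ'.D i = {a} := Function.update_self _ _ _
  have hDu : ∀ j, j ≠ i → Function.update φ.D i ({a} : Set α) j = φ.D j :=
    fun j hj => Function.update_of_ne hj _ _
  have hDui : Function.update φ.D i ({a} : Set α) i = {a} := Function.update_self _ _ _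
  constructor
  · rintro ⟨s, hs⟩
    obtain ⟨⟨hsQ, hsD⟩, hsS⟩ := hs
    by_cases hU : (∀ j, φ.Q j = false → (φ.D j).Nonempty) ∧ Nonempty (Fin n → α)
    · -- main case: all universal domains nonempty and tuples exist
      obtain ⟨hU, hne⟩ := hU
      have hα : Nonempty α := ⟨Classical.choice hne i⟩
      set d : Fin n → α :=
        fun j => if h : (φ.D j).Nonempty then h.choose else Classical.choice hα with hd_def
      have hd : ∀ j, φ.Q j = false → d j ∈ φ.D j := by
        intro j hj
        simp only [hd_def, dif_pos (hU j hj)]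
        exact (hU j hj).choose_spec
      set e : (Fin n → α) → (Fin n → α) :=
        fun t j => if j < i ∧ φ.Q j = false then t j else d j with he_def
      have hee : ∀ t, e (e t) = e t := by
        intro t; funext j
        by_cases h : j < i ∧ φ.Q j = false <;> simp [he_def, h]
      set τ : (Fin n → α) → (Fin n → α) :=
        fun t j => if φ.Q j = true then s j (e t) else e t j with hτ_def
      have hτsce : ∀ t, (∀ j, j < i → φ.Q j = false → t j ∈ φ.D j) → τ t ∈ φ.sce s := by
        intro t hpre
        constructor
        · intro j
          by_cases hq : φ.Q j = true
          · simpa [hτ_def, hq] using hsQ j hq (e t)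
          · have hq' : φ.Q j = false := by simpa using hq
            by_cases hlt : j < i
            · simpa [hτ_def, hq', he_def, hlt] using hpre j hlt hq'
            · simpa [hτ_def, hq', he_def, hlt] using hd j hq'
        · intro j hq
          have hst : s j (e t) = s j (τ t) :=
            hsD j hq _ _ (fun j' _ hj' => by simp [hτ_def, hj'])
          simp [hτ_def, hq, hst]
      set Good : (Fin n → α) → Prop := fun u => ∃ s₂, φ.Winning s₂ ∧
        ∃ t', t' ∈ φ.sce s₂ ∧ (∀ j, j < i → τ u j = t' j) ∧ t' i = a with hGood_def
      set W : (Fin n → α) → (Fin n → (Fin n → α) → α) :=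
        fun u => if h : Good u then h.choose else s with hW_def
      have hW1 : ∀ u, φ.Winning (W u) := by
        intro u
        by_cases h : Good u
        · simp only [hW_def, dif_pos h]; exact h.choose_spec.1
        · simp only [hW_def, dif_neg h]; exact ⟨⟨hsQ, hsD⟩, hsS⟩
      have hW2 : ∀ u, Good u →
          ∃ t', t' ∈ φ.sce (W u) ∧ (∀ j, j < i → τ u j = t' j) ∧ t' i = a := by
        intro u h
        have h2 := h.choose_spec.2
        simp only [hW_def, dif_pos h]
        exact h2
      refine ⟨fun j t => if j < i then s j t else if j = i then a else W (e t) j t,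
        ⟨⟨?_, ?_⟩, ?_⟩⟩
      · intro j hj t
        by_cases h1 : j < i
        · simp only [if_pos h1]
          rw [hD' j (ne_of_lt h1)]
          exact hsQ j hj t
        · by_cases h2 : j = i
          · subst h2
            simp [h1, hD'i]
          · simp only [if_neg h1, if_neg h2]
            rw [hD' j h2]
            exact (hW1 (e t)).1.1 j hj t
      · intro j hj t t'' hagg
        by_cases h1 : j < i
        · simp only [if_pos h1]
          exact hsD j hj t t'' hagg
        · by_cases h2 : j = i
          · simp [h1, h2]
          · simp only [if_neg h1, if_neg h2]
            have hi_lt : i < j := lt_of_le_of_ne (not_lt.mp h1) (Ne.symm h2)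
            have het : e t = e t'' := by
              funext j'
              by_cases h : j' < i ∧ φ.Q j' = false
              · simp only [he_def, if_pos h]
                exact hagg j' (h.1.trans hi_lt) h.2
              · simp [he_def, h]
            rw [het]
            exact (hW1 (e t'')).1.2 j hj t t'' hagg
      · intro t ht
        obtain ⟨hdom, hfol⟩ := ht
        have hti : t i = a := by
          have := hdom i
          rwa [hD'i, Set.mem_singleton_iff] at this
        have hdomφ : ∀ j, t j ∈ φ.D j := by
          intro j
          by_cases h : j = i
          · subst h; rw [hti]; exact ha
          · have := hdom j; rwa [hD' j h] at this
        have hpre : ∀ j, j < i → φ.Q j = false → t j ∈ φ.D j := fun j _ _ => hdomφ j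
        have hout : τ t ∈ φ.out := ⟨s, ⟨⟨hsQ, hsD⟩, hsS⟩, hτsce t hpre⟩
        obtain ⟨t₀, ht₀out, ht₀agree, ht₀i⟩ := hfix (τ t) hout
        have hτet : τ (e t) = τ t := by
          funext j
          simp only [hτ_def, hee t]
        have hGood : Good (e t) := by
          obtain ⟨s₂, hs₂, ht₀⟩ := ht₀out
          exact ⟨s₂, hs₂, t₀, ht₀, fun j hj => by rw [hτet]; exact ht₀agree j hj, ht₀i⟩
        obtain ⟨t', ht'sce, ht'agree0, ht'i⟩ := hW2 (e t) hGood
        have ht'agree : ∀ j, j < i → τ t j = t' j := fun j hj => by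
          rw [← hτet]; exact ht'agree0 j hj
        set w := W (e t) with hw_def
        have hw := hW1 (e t)
        have hclaim : ∀ j, j < i → t j = t' j := by
          intro j hj
          by_cases hq : φ.Q j = true
          · have h1 : t j = s j t := by
              have := hfol j hq
              simpa [if_pos hj] using this
            have h2 : s j t = s j (e t) := hsD j hq t (e t) (fun j' hj' hq' => by
              simp [he_def, hj'.trans hj, hq'])
            have h3 : τ t j = s j (e t) := by simp [hτ_def, hq]
            rw [h1, h2, ← h3]
            exact ht'agree j hj
          · have hq' : φ.Q j = false := by simpa using hq
            have hh : τ t j = t j := by simp [hτ_def, hq', he_def, hj]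
            rw [← hh]
            exact ht'agree j hj
        have htw : t ∈ φ.sce w := by
          refine ⟨hdomφ, ?_⟩
          intro j hq
          by_cases h1 : j < i
          · have e1 : t' j = w j t' := ht'sce.2 j hq
            have e2 : w j t' = w j t :=
              hw.1.2 j hq t' t (fun j' hj' _ => (hclaim j' (hj'.trans h1)).symm)
            rw [hclaim j h1, e1, e2]
          · by_cases h2 : j = i
            · subst h2
              have e1 : t' j = w j t' := ht'sce.2 j hq
              have e2 : w j t' = w j t :=
                hw.1.2 j hq t' t (fun j' hj' _ => (hclaim j' hj').symm)
              rw [hti, ← ht'i, e1, e2]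
            · have := hfol j hq
              simpa [if_neg h1, if_neg h2] using this
        exact ⟨hdom, (hw.2 htw).2⟩
    · -- degenerate case: some universal domain empty or no tuples
      refine ⟨fun j t => if j = i then a else s j t, ⟨⟨?_, ?_⟩, ?_⟩⟩
      · intro j hj t
        by_cases h : j = i
        · subst h; simp [hD'i]
        · simp only [if_neg h]
          rw [hD' j h]
          exact hsQ j hj t
      · intro j hj t t'' hagg
        by_cases h : j = i
        · simp [h]
        · simp only [if_neg h]
          exact hsD j hj t t'' hagg
      · intro t ht
        exfalso
        rcases not_and_or.mp hU with h | h
        · push_neg at h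
          obtain ⟨j, hju, hjD⟩ := h
          have hji : j ≠ i := by
            intro hh; rw [hh, hex] at hju; exact Bool.true_eq_false.mp hju
          have h2 := ht.1 j
          rw [hD' j hji, hjD] at h2
          exact h2
        · exact h ⟨t⟩
  · rintro ⟨s, ⟨⟨hval, hdep⟩, hsol⟩⟩
    refine ⟨s, ⟨⟨?_, hdep⟩, ?_⟩⟩
    · intro j hj t
      by_cases h : j = i
      · subst h
        have := hval j hj t
        rw [hD'i, Set.mem_singleton_iff] at this
        rw [this]; exact ha
      · have := hval j hj t
        rwa [hD' j h] at this
    · intro t ht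
      have htφ' : t ∈ φ'.sce s := by
        refine ⟨?_, ht.2⟩
        intro j
        by_cases h : j = i
        · subst h
          rw [hD'i]
          have h1 := ht.2 j hex
          have h2 := hval j hex t
          rw [hD'i, Set.mem_singleton_iff] at h2
          rw [h1, h2]
          exact rfl
        · rw [hD' j h]; exact ht.1 j
      exact ⟨ht.1, (hsol htφ').2⟩
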